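/- K-orthogonal decomposition generated by corrected bubbles: assume each b_T lies in V, and let 𝒞z ∈ W denote the K-orthogonal projection of z ∈ V onto W. Then V is the K-orthogonal direct sum of V_H := {z − 𝒞z : z ∈ span{b_T : T ∈ 𝒯_H}} and W: every v ∈ V has a unique decomposition v = v_H + w with v_H ∈ V_H, w ∈ W, and (K v_H, w′) = 0 for all w′ ∈ W; moreover dim V_H = #𝒯_H. -/

import Mathlib

open Finset

variable {n : ℕ} {N : Type*}

/-- The (edge-weighted) mass bilinear form `(M_S u, v)`. -/
noncomputable def Mform [Fintype N] (G : SimpleGraph N) [DecidableRel G.Adj]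
    (pos : N → EuclideanSpace ℝ (Fin n)) (α : ℝ) (S : Finset N) (u v : N → ℝ) : ℝ :=
  ∑ x ∈ S, (1 / 2 : ℝ) * ∑ y ∈ G.neighborFinset x,
    dist (pos x) (pos y) ^ ((2 : ℝ) - α) * (u x * v x)

/-- The (edge-weighted) stiffness bilinear form `(L_S u, v)`. -/
noncomputable def Lform [Fintype N] (G : SimpleGraph N) [DecidableRel G.Adj]
    (pos : N → EuclideanSpace ℝ (Fin n)) (α : ℝ) (S : Finset N) (u v : N → ℝ) : ℝ :=
  ∑ x ∈ S, (1 / 2 : ℝ) * ∑ y ∈ G.neighborFinset x,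
    ((u x - u y) * (v x - v y)) / dist (pos x) (pos y) ^ α

/-- `|v|_{M,S}`. -/
noncomputable def Mnorm [Fintype N] (G : SimpleGraph N) [DecidableRel G.Adj]
    (pos : N → EuclideanSpace ℝ (Fin n)) (α : ℝ) (S : Finset N) (v : N → ℝ) : ℝ :=
  Real.sqrt (Mform G pos α S v v)

/-- `|v|_{L,S}`. -/
noncomputable def Lnorm [Fintype N] (G : SimpleGraph N) [DecidableRel G.Adj]
    (pos : N → EuclideanSpace ℝ (Fin n)) (α : ℝ) (S : Finset N) (v : N → ℝ) : ℝ :=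
  Real.sqrt (Lform G pos α S v v)

/-- The element average `q_T(v) = (M_T v, 1) / |1|_{M,T}^2`. -/
noncomputable def avg [Fintype N] (G : SimpleGraph N) [DecidableRel G.Adj]
    (pos : N → EuclideanSpace ℝ (Fin n)) (α : ℝ) (T : Finset N) (v : N → ℝ) : ℝ :=
  Mform G pos α T v (fun _ => 1) / Mform G pos α T (fun _ => 1) (fun _ => 1)

/-- Euclidean inner product of functions on the node set. -/
noncomputable def ip [Fintype N] (u v : N → ℝ) : ℝ := ∑ x, u x * v x

/-- Length of a walk: the sum of Euclidean edge lengths. -/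
noncomputable def wlen (G : SimpleGraph N) (pos : N → EuclideanSpace ℝ (Fin n))
    {x y : N} (w : G.Walk x y) : ℝ :=
  (w.darts.map (fun d => dist (pos d.toProd.1) (pos d.toProd.2))).sum

/-- Graph distance from `x` to the boundary set `bnd`, along paths inside `T`. -/
noncomputable def distT (G : SimpleGraph N) (pos : N → EuclideanSpace ℝ (Fin n))
    (T bnd : Finset N) (x : N) : ℝ :=
  sInf {ℓ : ℝ | ∃ y ∈ bnd, ∃ w : G.Walk x y, (∀ z ∈ w.support, z ∈ T) ∧ ℓ = wlen G pos w}

/-- The non-normalized bubble function `b̃_T`. -/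
noncomputable def btilde [DecidableEq N] (G : SimpleGraph N) (pos : N → EuclideanSpace ℝ (Fin n))
    (T bnd : Finset N) : N → ℝ :=
  fun x => if x ∈ T then distT G pos T bnd x else 0

/-- The corrected bubble space `V_H = {z - 𝒞z : z ∈ span {b_T : T ∈ 𝒯_H}}`. -/
def VHset (P : Finset (Finset N)) (b : Finset N → N → ℝ)
    (C : (N → ℝ) → N → ℝ) : Set (N → ℝ) :=
  {v | ∃ z ∈ Submodule.span ℝ {g : N → ℝ | ∃ T ∈ P, g = b T}, v = z - C z}

section aux
variable [Fintype N] (G : SimpleGraph N) [DecidableRel G.Adj]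
  (pos : N → EuclideanSpace ℝ (Fin n)) (α : ℝ)

lemma Mform_eq (S : Finset N) (u v : N → ℝ) :
    Mform G pos α S u v = ∑ x ∈ S,
      ((1/2 : ℝ) * ∑ y ∈ G.neighborFinset x, dist (pos x) (pos y) ^ ((2:ℝ)-α)) * (u x * v x) := by
  unfold Mform
  refine Finset.sum_congr rfl fun x _ => ?_
  rw [mul_assoc, Finset.sum_mul]

lemma avg_zero' (S : Finset N) (u : N → ℝ) (h : ∀ x ∈ S, u x = 0) :
    avg G pos α S u = 0 := by
  unfold avg
  rw [Mform_eq, Finset.sum_eq_zero, zero_div]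
  intro x hx; rw [h x hx]; ring

lemma avg_add' (S : Finset N) (u u' : N → ℝ) :
    avg G pos α S (u + u') = avg G pos α S u + avg G pos α S u' := by
  have hnum : Mform G pos α S (u + u') (fun _ => 1) =
      Mform G pos α S u (fun _ => 1) + Mform G pos α S u' (fun _ => 1) := by
    rw [Mform_eq, Mform_eq, Mform_eq, ← Finset.sum_add_distrib]
    exact Finset.sum_congr rfl fun x _ => by simp only [Pi.add_apply]; ring
  unfold avg
  rw [hnum, add_div]

lemma avg_smul' (S : Finset N) (c : ℝ) (u : N → ℝ) :
    avg G pos α S (c • u) = c * avg G pos α S u := by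
  have hnum : Mform G pos α S (c • u) (fun _ => 1) = c * Mform G pos α S u (fun _ => 1) := by
    rw [Mform_eq, Mform_eq, Finset.mul_sum]
    exact Finset.sum_congr rfl fun x _ => by simp only [Pi.smul_apply, smul_eq_mul]; ring
  unfold avg
  rw [hnum, mul_div_assoc]

/-- `avg` as a linear map. -/
noncomputable def avgLin (S : Finset N) : (N → ℝ) →ₗ[ℝ] ℝ where
  toFun := avg G pos α S
  map_add' := avg_add' G pos α S
  map_smul' := avg_smul' G pos α S

@[simp] lemma avgLin_apply (S : Finset N) (u : N → ℝ) :
    avgLin G pos α S u = avg G pos α S u := rfl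

lemma Lform_self_nonneg (v : N → ℝ) : 0 ≤ Lform G pos α Finset.univ v v :=
  Finset.sum_nonneg fun x _ => mul_nonneg (by norm_num) <| Finset.sum_nonneg fun y _ =>
    div_nonneg (mul_self_nonneg _) (Real.rpow_nonneg dist_nonneg _)

lemma Lform_self_zero (hdist : ∀ x y : N, G.Adj x y → 0 < dist (pos x) (pos y))
    (v : N → ℝ) (h : Lform G pos α Finset.univ v v = 0) :
    ∀ x y, G.Adj x y → v x = v y := by
  intro x y hxy
  have hnn : ∀ i ∈ (Finset.univ : Finset N), 0 ≤ (1/2:ℝ) * ∑ z ∈ G.neighborFinset i,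
      ((v i - v z) * (v i - v z)) / dist (pos i) (pos z) ^ α :=
    fun i _ => mul_nonneg (by norm_num) <| Finset.sum_nonneg fun z _ =>
      div_nonneg (mul_self_nonneg _) (Real.rpow_nonneg dist_nonneg _)
  have hx := (Finset.sum_eq_zero_iff_of_nonneg hnn).mp h x (Finset.mem_univ x)
  have hnn2 : ∀ z ∈ G.neighborFinset x,
      0 ≤ ((v x - v z) * (v x - v z)) / dist (pos x) (pos z) ^ α :=
    fun z _ => div_nonneg (mul_self_nonneg _) (Real.rpow_nonneg dist_nonneg _)
  have hinner : ∑ z ∈ G.neighborFinset x,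
      ((v x - v z) * (v x - v z)) / dist (pos x) (pos z) ^ α = 0 := by linarith
  have hy := (Finset.sum_eq_zero_iff_of_nonneg hnn2).mp hinner y
    (by rwa [SimpleGraph.mem_neighborFinset])
  have hd : (0:ℝ) < dist (pos x) (pos y) ^ α := Real.rpow_pos_of_pos (hdist x y hxy) α
  have h0 : (v x - v y) * (v x - v y) = 0 := by
    rcases div_eq_zero_iff.mp hy with h' | h'
    · exact h'
    · exact absurd h' hd.ne'
  have := mul_self_eq_zero.mp h0
  linarith

omit [Fintype N] in
lemma walk_const (G : SimpleGraph N) (v : N → ℝ) (h : ∀ x y, G.Adj x y → v x = v y)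
    {x y : N} (w : G.Walk x y) : v x = v y := by
  induction w with
  | nil => rfl
  | cons h' _ ih => exact (h _ _ h').trans ih

end aux

/-- Membership in `V`. -/
abbrev memV (N : Type*) (Γ : Set N) (v : N → ℝ) : Prop := ∀ x ∈ Γ, v x = 0

/-- Membership in `W`. -/
abbrev memW (N : Type*) (Γ : Set N) (Pi : (N → ℝ) → (N → ℝ)) (w : N → ℝ) : Prop :=
  (∀ x ∈ Γ, w x = 0) ∧ Pi w = 0

theorem stmt17 [Fintype N] [DecidableEq N] (G : SimpleGraph N) [DecidableRel G.Adj]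
    (pos : N → EuclideanSpace ℝ (Fin n)) (α : ℝ)
    (hα : 0 ≤ α ∧ α ≤ 2) (hpos : Function.Injective pos)
    (hdist : ∀ x y : N, G.Adj x y → 0 < dist (pos x) (pos y))
    (hcard : 1 < Fintype.card N) (hconn : G.Connected)
    (Γ : Set N) (hΓ : Γ.Nonempty)
    (P : Finset (Finset N))
    (hPne : ∀ T ∈ P, T.Nonempty)
    (hPdisj : ∀ T ∈ P, ∀ S ∈ P, T ≠ S → Disjoint T S)
    (hPcover : ∀ x : N, ∃ T ∈ P, x ∈ T)
    (Pi : (N → ℝ) → (N → ℝ))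
    (hPi : ∀ v : N → ℝ, ∀ T ∈ P, ∀ x ∈ T, Pi v x = avg G pos α T v)
    (bnd : Finset N → Finset N)
    (hbndsub : ∀ T ∈ P, bnd T ⊆ T) (hbndne : ∀ T ∈ P, (bnd T).Nonempty)
    (hbndadj : ∀ T ∈ P, ∀ x ∈ T, (∃ y : N, G.Adj x y ∧ y ∉ T) → x ∈ bnd T)
    (hbndΓ : ∀ T ∈ P, ∀ x ∈ T, x ∈ Γ → x ∈ bnd T)
    (hjoin : ∀ T ∈ P, ∀ x ∈ T, ∃ y ∈ bnd T, ∃ w : G.Walk x y, ∀ z ∈ w.support, z ∈ T)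
    (hqpos : ∀ T ∈ P, 0 < avg G pos α T (btilde G pos T (bnd T)))
    (b : Finset N → N → ℝ)
    (hb : ∀ T ∈ P, b T = fun x =>
      btilde G pos T (bnd T) x / avg G pos α T (btilde G pos T (bnd T)))
    (hbV : ∀ T ∈ P, ∀ x ∈ Γ, b T x = 0)
    (K : (N → ℝ) →ₗ[ℝ] (N → ℝ))
    (hKsym : ∀ u v : N → ℝ, ip (K u) v = ip u (K v))
    (γ γ' : ℝ) (hγ : 0 < γ) (hγγ' : γ ≤ γ')
    (hspec : ∀ v : N → ℝ, (∀ x ∈ Γ, v x = 0) →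
      γ * Lform G pos α Finset.univ v v ≤ ip (K v) v ∧
        ip (K v) v ≤ γ' * Lform G pos α Finset.univ v v)
    (C : (N → ℝ) → (N → ℝ))
    (hCW : ∀ z : N → ℝ, (∀ x ∈ Γ, z x = 0) → (∀ x ∈ Γ, C z x = 0) ∧ Pi (C z) = 0)
    (hCproj : ∀ z : N → ℝ, (∀ x ∈ Γ, z x = 0) →
      ∀ w : N → ℝ, ((∀ x ∈ Γ, w x = 0) ∧ Pi w = 0) → ip (K (C z)) w = ip (K z) w) :
    (∀ v : N → ℝ, (∀ x ∈ Γ, v x = 0) →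
      ∃! p : (N → ℝ) × (N → ℝ), p.1 ∈ VHset P b C ∧
        ((∀ x ∈ Γ, p.2 x = 0) ∧ Pi p.2 = 0) ∧ v = p.1 + p.2) ∧
    (∀ vH ∈ VHset P b C, ∀ w : N → ℝ,
      ((∀ x ∈ Γ, w x = 0) ∧ Pi w = 0) → ip (K vH) w = 0) ∧
    (∃ VH : Submodule ℝ (N → ℝ), (VH : Set (N → ℝ)) = VHset P b C ∧
      Module.finrank ℝ VH = P.card) := by
  classical
  -- ip is linear in the first argument
  have hip_sub : ∀ u u' w : N → ℝ, ip (u - u') w = ip u w - ip u' w := by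
    intro u u' w; simp [ip, sub_mul, Finset.sum_sub_distrib]
  have hip_add : ∀ u u' w : N → ℝ, ip (u + u') w = ip u w + ip u' w := by
    intro u u' w; simp [ip, add_mul, Finset.sum_add_distrib]
  have hip_smul : ∀ (c : ℝ) (u w : N → ℝ), ip (c • u) w = c * ip u w := by
    intro c u w; simp [ip, Finset.mul_sum, mul_assoc]
  -- Pi vanishes iff all averages vanish
  have hPi_zero_iff : ∀ w : N → ℝ, Pi w = 0 ↔ ∀ T ∈ P, avg G pos α T w = 0 := by
    intro w
    constructor
    · intro h T hT
      obtain ⟨x, hx⟩ := hPne T hT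
      have := congrFun h x
      rwa [hPi w T hT x hx] at this
    · intro h
      funext x
      obtain ⟨T, hT, hx⟩ := hPcover x
      rw [hPi w T hT x hx]
      exact h T hT
  -- memV N Γ closure facts
  have hVp_sub : ∀ u u', memV N Γ u → memV N Γ u' → memV N Γ (u - u') := fun u u' h h' x hx => by
    simp [_root_.Pi.sub_apply, h x hx, h' x hx]
  have hVp_add : ∀ u u', memV N Γ u → memV N Γ u' → memV N Γ (u + u') := fun u u' h h' x hx => by
    simp [_root_.Pi.add_apply, h x hx, h' x hx]
  -- W closure facts
  have hWp_sub : ∀ u u', memW N Γ Pi u → memW N Γ Pi u' → memW N Γ Pi (u - u') := by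
    intro u u' h h'
    refine ⟨hVp_sub u u' h.1 h'.1, (hPi_zero_iff _).mpr fun T hT => ?_⟩
    have := map_sub (avgLin G pos α T) u u'
    simp only [avgLin_apply] at this
    rw [this, (hPi_zero_iff u).mp h.2 T hT, (hPi_zero_iff u').mp h'.2 T hT, sub_zero]
  have hWp_add : ∀ u u', memW N Γ Pi u → memW N Γ Pi u' → memW N Γ Pi (u + u') := by
    intro u u' h h'
    refine ⟨hVp_add u u' h.1 h'.1, (hPi_zero_iff _).mpr fun T hT => ?_⟩
    have := map_add (avgLin G pos α T) u u'
    simp only [avgLin_apply] at this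
    rw [this, (hPi_zero_iff u).mp h.2 T hT, (hPi_zero_iff u').mp h'.2 T hT, add_zero]
  have hWp_smul : ∀ (c : ℝ) u, memW N Γ Pi u → memW N Γ Pi (c • u) := by
    intro c u h
    refine ⟨fun x hx => by simp [_root_.Pi.smul_apply, h.1 x hx], (hPi_zero_iff _).mpr fun T hT => ?_⟩
    rw [avg_smul', (hPi_zero_iff u).mp h.2 T hT, mul_zero]
  have hWp_zero : memW N Γ Pi 0 := by
    refine ⟨fun x _ => rfl, (hPi_zero_iff _).mpr fun T hT => ?_⟩
    exact avg_zero' G pos α T 0 fun x _ => rfl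
  -- positive definiteness of K on V
  have hKpos : ∀ u : N → ℝ, memV N Γ u → ip (K u) u = 0 → u = 0 := by
    intro u hu h
    have h1 := (hspec u hu).1
    have h2 := Lform_self_nonneg G pos α u
    have hL0 : Lform G pos α Finset.univ u u = 0 := by nlinarith
    have hedge := Lform_self_zero G pos α hdist u hL0
    obtain ⟨g, hg⟩ := hΓ
    funext x
    have hreach : G.Reachable x g := hconn.preconnected x g
    obtain ⟨w⟩ := hreach
    have := walk_const G u hedge w
    rw [this, hu g hg]; rfl
  -- uniqueness of the K-orthogonal projection onto W
  have hCuniq : ∀ z : N → ℝ, memV N Γ z → ∀ u : N → ℝ, memW N Γ Pi u →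
      (∀ w : N → ℝ, memW N Γ Pi w → ip (K u) w = ip (K z) w) → u = C z := by
    intro z hz u hu hproj
    have hCz : memW N Γ Pi (C z) := hCW z hz
    have hd : memW N Γ Pi (u - C z) := hWp_sub u (C z) hu hCz
    have hzero : ip (K (u - C z)) (u - C z) = 0 := by
      rw [map_sub, hip_sub, hproj _ hd, hCproj z hz _ hd, sub_self]
    have := hKpos (u - C z) hd.1 hzero
    exact sub_eq_zero.mp this
  have hC0 : C 0 = 0 := by
    exact (hCuniq 0 (fun x _ => rfl) 0 hWp_zero fun w hw => rfl).symm
  have hCadd : ∀ z z', memV N Γ z → memV N Γ z' → C (z + z') = C z + C z' := by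
    intro z z' hz hz'
    refine (hCuniq (z + z') (hVp_add z z' hz hz') (C z + C z')
      (hWp_add _ _ (hCW z hz) (hCW z' hz')) fun w hw => ?_).symm
    rw [map_add, hip_add, hCproj z hz w hw, hCproj z' hz' w hw, map_add, hip_add]
  have hCsmul : ∀ (c : ℝ) z, memV N Γ z → C (c • z) = c • C z := by
    intro c z hz
    have hVpc : memV N Γ (c • z) := fun x hx => by simp [_root_.Pi.smul_apply, hz x hx]
    refine (hCuniq (c • z) hVpc (c • C z) (hWp_smul c _ (hCW z hz)) fun w hw => ?_).symm
    rw [map_smul, hip_smul, hCproj z hz w hw, map_smul, hip_smul]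
  -- the generator set of the bubble span
  set Sgen : Set (N → ℝ) := {g : N → ℝ | ∃ T ∈ P, g = b T} with hSgen
  have hVp_span : ∀ z ∈ Submodule.span ℝ Sgen, memV N Γ z := by
    intro z hz
    induction hz using Submodule.span_induction with
    | mem g hg => obtain ⟨T, hT, rfl⟩ := hg; exact hbV T hT
    | zero => exact fun x _ => rfl
    | add u v _ _ hu hv => exact hVp_add u v hu hv
    | smul c u _ hu => exact fun x hx => by simp [_root_.Pi.smul_apply, hu x hx]
  -- averages of the bubbles
  have havg_bz : ∀ S ∈ P, ∀ T ∈ P, avg G pos α S (b T) = if S = T then 1 else 0 := by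
    intro S hS T hT
    by_cases h : S = T
    · subst h
      rw [if_pos rfl, hb S hS]
      have : (fun x => btilde G pos S (bnd S) x / avg G pos α S (btilde G pos S (bnd S)))
          = (avg G pos α S (btilde G pos S (bnd S)))⁻¹ • btilde G pos S (bnd S) := by
        funext x; simp [div_eq_inv_mul]
      rw [this, avg_smul']
      exact inv_mul_cancel₀ (hqpos S hS).ne'
    · rw [if_neg h]
      have hdisj := hPdisj S hS T hT h
      refine avg_zero' G pos α S (b T) fun x hx => ?_
      have hxT : x ∉ T := Finset.disjoint_left.mp hdisj hx
      rw [hb T hT]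
      simp [btilde, hxT]
  -- representation of span elements
  have hrep : ∀ z ∈ Submodule.span ℝ Sgen, z = ∑ T ∈ P, avg G pos α T z • b T := by
    intro z hz
    induction hz using Submodule.span_induction with
    | mem g hg =>
      obtain ⟨T0, hT0, rfl⟩ := hg
      have : ∀ T ∈ P, avg G pos α T (b T0) • b T = if T = T0 then b T0 else 0 := by
        intro T hT
        rw [havg_bz T hT T0 hT0]
        split_ifs with h
        · subst h; simp
        · simp
      rw [Finset.sum_congr rfl this, Finset.sum_ite_eq' P T0 (fun _ => b T0), if_pos hT0]
    | zero =>
      rw [Finset.sum_eq_zero]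
      intro T hT
      rw [avg_zero' G pos α T 0 fun x _ => rfl, zero_smul]
    | add u v hu hv ihu ihv =>
      have : ∀ T ∈ P, avg G pos α T (u + v) • b T
          = avg G pos α T u • b T + avg G pos α T v • b T := by
        intro T hT
        rw [avg_add', add_smul]
      rw [Finset.sum_congr rfl this, Finset.sum_add_distrib, ← ihu, ← ihv]
    | smul c u hu ihu =>
      have : ∀ T ∈ P, avg G pos α T (c • u) • b T = c • (avg G pos α T u • b T) := by
        intro T hT
        rw [avg_smul', smul_smul]
      rw [Finset.sum_congr rfl this, ← Finset.smul_sum, ← ihu]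
  have hspan0 : ∀ z ∈ Submodule.span ℝ Sgen, (∀ T ∈ P, avg G pos α T z = 0) → z = 0 := by
    intro z hz h0
    rw [hrep z hz, Finset.sum_eq_zero]
    intro T hT
    rw [h0 T hT, zero_smul]
  -- average of a finite combination
  have havg_sum : ∀ (S : Finset N) (ι : Finset (Finset N)) (c : Finset N → ℝ)
      (f : Finset N → N → ℝ),
      avg G pos α S (∑ T ∈ ι, c T • f T) = ∑ T ∈ ι, c T * avg G pos α S (f T) := by
    intro S ι c f
    induction ι using Finset.induction with
    | empty => simpa using avg_zero' G pos α S 0 fun x _ => rfl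
    | insert _ _ h ih => rw [Finset.sum_insert h, Finset.sum_insert h, avg_add', avg_smul', ih]
  -- Part 2: orthogonality
  have part2 : ∀ vH ∈ VHset P b C, ∀ w : N → ℝ, memW N Γ Pi w → ip (K vH) w = 0 := by
    intro vH hvH w hw
    obtain ⟨z, hz, rfl⟩ := hvH
    have hVz : memV N Γ z := hVp_span z hz
    rw [map_sub, hip_sub, hCproj z hVz w hw, sub_self]
  -- Part 1: existence and uniqueness of the decomposition
  have part1 : ∀ v : N → ℝ, memV N Γ v →
      ∃! p : (N → ℝ) × (N → ℝ), p.1 ∈ VHset P b C ∧ memW N Γ Pi p.2 ∧ v = p.1 + p.2 := by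
    intro v hv
    set zv : N → ℝ := ∑ T ∈ P, avg G pos α T v • b T with hzv
    have hzv_mem : zv ∈ Submodule.span ℝ Sgen :=
      Submodule.sum_mem _ fun T hT => Submodule.smul_mem _ _
        (Submodule.subset_span ⟨T, hT, rfl⟩)
    have havg_zv : ∀ S ∈ P, avg G pos α S zv = avg G pos α S v := by
      intro S hS
      rw [hzv, havg_sum]
      have : ∀ T ∈ P, avg G pos α T v * avg G pos α S (b T)
          = if S = T then avg G pos α T v else 0 := by
        intro T hT
        rw [havg_bz S hS T hT]
        split_ifs <;> ring
      rw [Finset.sum_congr rfl this, Finset.sum_ite_eq P S (fun T => avg G pos α T v),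
        if_pos hS]
    have hVzv : memV N Γ zv := hVp_span zv hzv_mem
    have hCzv : memW N Γ Pi (C zv) := hCW zv hVzv
    set vH : N → ℝ := zv - C zv with hvH
    set w0 : N → ℝ := v - vH with hw0
    have hw0W : memW N Γ Pi w0 := by
      constructor
      · intro x hx
        show v x - (zv x - C zv x) = 0
        rw [hv x hx, hVzv x hx, hCzv.1 x hx]
        ring
      · refine (hPi_zero_iff _).mpr fun T hT => ?_
        have : avg G pos α T w0 = avg G pos α T v - (avg G pos α T zv - avg G pos α T (C zv)) := by
          have h1 := map_sub (avgLin G pos α T) v vH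
          have h2 := map_sub (avgLin G pos α T) zv (C zv)
          simp only [avgLin_apply] at h1 h2
          rw [hw0, h1, hvH, h2]
        rw [this, havg_zv T hT, (hPi_zero_iff (C zv)).mp hCzv.2 T hT]
        ring
    refine ⟨⟨vH, w0⟩, ⟨⟨zv, hzv_mem, rfl⟩, hw0W, by simp [hw0]⟩, ?_⟩
    rintro ⟨q1, q2⟩ ⟨⟨z', hz', rfl⟩, hq2, hvq⟩
    have hVz' : memV N Γ z' := hVp_span z' hz'
    have hCz' : memW N Γ Pi (C z') := hCW z' hVz'
    -- show z' = zv
    have havg_z' : ∀ S ∈ P, avg G pos α S z' = avg G pos α S v := by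
      intro S hS
      have h1 : avg G pos α S v = avg G pos α S z' - avg G pos α S (C z') + avg G pos α S q2 := by
        have e1 := map_add (avgLin G pos α S) (z' - C z') q2
        have e2 := map_sub (avgLin G pos α S) z' (C z')
        simp only [avgLin_apply] at e1 e2
        rw [hvq, e1, e2]
      rw [h1, (hPi_zero_iff (C z')).mp hCz'.2 S hS, (hPi_zero_iff q2).mp hq2.2 S hS]
      ring
    have hzz : z' = zv := by
      have hmem : z' - zv ∈ Submodule.span ℝ Sgen := Submodule.sub_mem _ hz' hzv_mem
      have h0 : ∀ T ∈ P, avg G pos α T (z' - zv) = 0 := by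
        intro T hT
        have e := map_sub (avgLin G pos α T) z' zv
        simp only [avgLin_apply] at e
        rw [e, havg_z' T hT, havg_zv T hT, sub_self]
      have := hspan0 _ hmem h0
      exact sub_eq_zero.mp this
    have h1 : z' - C z' = vH := by rw [hzz, hvH]
    refine Prod.ext h1 ?_
    have : q2 = v - (z' - C z') := eq_sub_of_add_eq' hvq.symm
    rw [this, h1, hw0]
  -- Part 3: the submodule and its dimension
  have part3 : ∃ VH : Submodule ℝ (N → ℝ), (VH : Set (N → ℝ)) = VHset P b C ∧
      Module.finrank ℝ VH = P.card := by
    set f : ↥P → (N → ℝ) := fun T => b ↑T - C (b ↑T) with hf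
    refine ⟨Submodule.span ℝ (Set.range f), ?_, ?_⟩
    · apply Set.Subset.antisymm
      · intro u hu
        induction hu using Submodule.span_induction with
        | mem g hg =>
          obtain ⟨T, rfl⟩ := hg
          exact ⟨b ↑T, Submodule.subset_span ⟨↑T, T.2, rfl⟩, rfl⟩
        | zero => exact ⟨0, Submodule.zero_mem _, by rw [hC0]; simp⟩
        | add u v hu hv ihu ihv =>
          obtain ⟨z, hz, rfl⟩ := ihu
          obtain ⟨z', hz', rfl⟩ := ihv
          refine ⟨z + z', Submodule.add_mem _ hz hz', ?_⟩
          rw [hCadd z z' (hVp_span z hz) (hVp_span z' hz')]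
          abel
        | smul c u hu ihu =>
          obtain ⟨z, hz, rfl⟩ := ihu
          refine ⟨c • z, Submodule.smul_mem _ c hz, ?_⟩
          rw [hCsmul c z (hVp_span z hz), smul_sub]
      · rintro u ⟨z, hz, rfl⟩
        clear part1 part2
        induction hz using Submodule.span_induction with
        | mem g hg =>
          obtain ⟨T, hT, rfl⟩ := hg
          exact Submodule.subset_span ⟨⟨T, hT⟩, rfl⟩
        | zero => rw [hC0]; simpa using Submodule.zero_mem _
        | add x y hx hy ihx ihy =>
          have : x + y - C (x + y) = (x - C x) + (y - C y) := by
            rw [hCadd x y (hVp_span x hx) (hVp_span y hy)]; abel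
          rw [this]
          exact Submodule.add_mem _ ihx ihy
        | smul c x hx ihx =>
          have : c • x - C (c • x) = c • (x - C x) := by
            rw [hCsmul c x (hVp_span x hx), smul_sub]
          rw [this]
          exact Submodule.smul_mem _ c ihx
    · have hli : LinearIndependent ℝ f := by
        rw [Fintype.linearIndependent_iff]
        intro c hc S
        have h0 : avg G pos α ↑S (∑ i : ↥P, c i • f i) = 0 := by
          rw [hc]
          exact avg_zero' G pos α ↑S 0 fun x _ => rfl
        have e := map_sum (avgLin G pos α ↑S) (fun i => c i • f i) Finset.univ
        simp only [avgLin_apply] at e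
        rw [e] at h0
        have : ∀ i ∈ (Finset.univ : Finset ↥P),
            avg G pos α ↑S (c i • f i) = if S = i then c i else 0 := by
          intro i _
          rw [avg_smul', hf]
          have e2 := map_sub (avgLin G pos α ↑S) (b ↑i) (C (b ↑i))
          simp only [avgLin_apply] at e2
          rw [e2]
          have hCb : memW N Γ Pi (C (b ↑i)) := hCW (b ↑i) (hbV ↑i i.2)
          rw [(hPi_zero_iff (C (b ↑i))).mp hCb.2 ↑S S.2, havg_bz ↑S S.2 ↑i i.2]
          by_cases h : S = i
          · subst h; simp
          · have : (↑S : Finset N) ≠ ↑i := fun hh => h (Subtype.ext hh)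
            rw [if_neg this, if_neg h]
            ring
        rw [Finset.sum_congr rfl this, Finset.sum_ite_eq Finset.univ S c,
          if_pos (Finset.mem_univ S)] at h0
        exact h0
      rw [finrank_span_eq_card hli, Fintype.card_coe]
  exact ⟨part1, part2, part3⟩
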